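/- Let p be an L-Lipschitz-continuous probability density function on ℝ^d supported on the unit cube [0,1]^d that is strictly positive on [0,1]^d. Then for every positive integer n there exists a histogram density p̃ ∈ E[0,1]^d_n of resolution n such that TV(p, p̃) = (1/2)‖p − p̃‖_{L^1([0,1]^d)} ≤ L√d/(2n). -/

import Mathlib

open MeasureTheory Matrix

/-- The closed unit cube `[0,1]^d` in `ℝ^d`. -/
def unitCube (d : ℕ) : Set (EuclideanSpace ℝ (Fin d)) := {x | ∀ i, x i ∈ Set.Icc (0:ℝ) 1}

/-- The pdf of a `d`-dimensional histogram distribution of resolution `n` with weights `w`: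
it equals `w k` on the cube `c_k = ∏_i [k i / n, (k i + 1)/n)`. -/
noncomputable def histPdf (d n : ℕ) (w : (Fin d → Fin n) → ℝ)
    (x : EuclideanSpace ℝ (Fin d)) : ℝ :=
  ∑ k : Fin d → Fin n, w k *
    Set.indicator (Set.univ.pi fun i => Set.Ico ((k i : ℝ) / n) (((k i : ℝ) + 1) / n))
      (fun _ => (1:ℝ)) (fun i => x i)

namespace HistAux

open scoped ENNReal NNReal

/-- The half-open box indexed by `k` in `ℝ^d` (as a Euclidean space set). -/
def boxE (d n : ℕ) (k : Fin d → Fin n) : Set (EuclideanSpace ℝ (Fin d)) :=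
  {x | ∀ i, x i ∈ Set.Ico ((k i : ℝ) / n) (((k i : ℝ) + 1) / n)}

lemma boxE_eq_preimage (d n : ℕ) (k : Fin d → Fin n) :
    boxE d n k = ((MeasurableEquiv.toLp 2 (Fin d → ℝ)).symm) ⁻¹'
      (Set.univ.pi fun i => Set.Ico ((k i : ℝ) / n) (((k i : ℝ) + 1) / n)) := by
  ext x
  constructor
  · intro h i _
    exact h i
  · intro h i
    exact h i (Set.mem_univ i)

lemma measurableSet_boxE (d n : ℕ) (k : Fin d → Fin n) : MeasurableSet (boxE d n k) := by
  rw [boxE_eq_preimage]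
  exact (MeasurableSet.univ_pi fun i => measurableSet_Ico).preimage
    ((MeasurableEquiv.toLp 2 (Fin d → ℝ)).symm).measurable

lemma unitCube_eq_preimage (d : ℕ) :
    unitCube d = ((MeasurableEquiv.toLp 2 (Fin d → ℝ)).symm) ⁻¹'
      (Set.univ.pi fun _ => Set.Icc (0:ℝ) 1) := by
  ext x
  constructor
  · intro h i _
    exact h i
  · intro h i
    exact h i (Set.mem_univ i)

lemma measurableSet_unitCube (d : ℕ) : MeasurableSet (unitCube d) := by
  rw [unitCube_eq_preimage]
  exact (MeasurableSet.univ_pi fun i => measurableSet_Icc).preimage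
    ((MeasurableEquiv.toLp 2 (Fin d → ℝ)).symm).measurable

lemma volume_unitCube (d : ℕ) : volume (unitCube d) = 1 := by
  rw [unitCube_eq_preimage,
    (EuclideanSpace.volume_preserving_symm_measurableEquiv_toLp (Fin d)).measure_preimage
      ((MeasurableSet.univ_pi fun i => measurableSet_Icc).nullMeasurableSet)]
  rw [volume_pi_pi]
  simp [Real.volume_Icc]

lemma volume_boxE (d n : ℕ) (hn : 0 < n) (k : Fin d → Fin n) :
    volume (boxE d n k) = ((n : ℝ≥0∞)⁻¹) ^ d := by
  rw [boxE_eq_preimage,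
    (EuclideanSpace.volume_preserving_symm_measurableEquiv_toLp (Fin d)).measure_preimage
      ((MeasurableSet.univ_pi fun i => measurableSet_Ico).nullMeasurableSet)]
  rw [volume_pi_pi]
  have : ∀ i : Fin d, volume (Set.Ico ((k i : ℝ) / n) (((k i : ℝ) + 1) / n))
      = (n : ℝ≥0∞)⁻¹ := by
    intro i
    rw [Real.volume_Ico]
    have h : ((k i : ℝ) + 1) / n - (k i : ℝ) / n = 1 / n := by
      rw [div_sub_div_same]; ring_nf
    rw [h, one_div, ← ENNReal.ofReal_natCast n,
      ← ENNReal.ofReal_inv_of_pos (by exact_mod_cast hn)]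
  simp [this]

lemma boxE_subset_unitCube {d n : ℕ} (hn : 0 < n) (k : Fin d → Fin n) :
    boxE d n k ⊆ unitCube d := by
  intro x hx i
  have h := hx i
  have hn' : (0:ℝ) < n := by exact_mod_cast hn
  have h1 : (0:ℝ) ≤ (k i : ℝ) / n := by positivity
  have h2 : ((k i : ℝ) + 1) / n ≤ 1 := by
    rw [div_le_one hn']
    have : (k i : ℕ) + 1 ≤ n := (k i).isLt
    exact_mod_cast this
  exact ⟨le_trans h1 h.1, le_trans h.2.le h2⟩

lemma boxE_inj {d n : ℕ} {k k' : Fin d → Fin n} {x : EuclideanSpace ℝ (Fin d)}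
    (h1 : x ∈ boxE d n k) (h2 : x ∈ boxE d n k') : k = k' := by
  funext i
  have H1 := h1 i
  have H2 := h2 i
  have key : ∀ {a b : Fin n}, x i ∈ Set.Ico ((a : ℝ) / n) (((a : ℝ) + 1) / n) →
      x i ∈ Set.Ico ((b : ℝ) / n) (((b : ℝ) + 1) / n) → (a : ℕ) ≤ b := by
    intro a b ha hb
    by_contra hab
    push_neg at hab
    have hn' : (0:ℝ) < n := by
      have : 0 < n := (a).pos
      exact_mod_cast this
    have hba : ((b : ℕ) : ℝ) + 1 ≤ (a : ℕ) := by exact_mod_cast hab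
    have hax : (a : ℝ) ≤ x i * n := by
      have := ha.1
      rwa [div_le_iff₀ hn'] at this
    have hxb : x i * n < (b : ℝ) + 1 := by
      have := hb.2
      rwa [lt_div_iff₀ hn'] at this
    linarith
  exact Fin.ext (le_antisymm (key H1 H2) (key H2 H1))

lemma mem_boxE_iff_indicator {d n : ℕ} (k : Fin d → Fin n) (x : EuclideanSpace ℝ (Fin d)) :
    (fun i => x i) ∈ (Set.univ.pi fun i => Set.Ico ((k i : ℝ) / n) (((k i : ℝ) + 1) / n))
      ↔ x ∈ boxE d n k := by
  simp [boxE, Set.mem_pi]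

lemma histPdf_eq_on_box {d n : ℕ} {w : (Fin d → Fin n) → ℝ} {k : Fin d → Fin n}
    {x : EuclideanSpace ℝ (Fin d)} (hx : x ∈ boxE d n k) : histPdf d n w x = w k := by
  unfold histPdf
  rw [Finset.sum_eq_single k]
  · rw [Set.indicator_of_mem ((mem_boxE_iff_indicator k x).mpr hx), mul_one]
  · intro k' _ hk'
    rw [Set.indicator_of_notMem, mul_zero]
    intro hmem
    exact hk' (boxE_inj ((mem_boxE_iff_indicator k' x).mp hmem) hx)
  · intro h
    exact absurd (Finset.mem_univ k) h

lemma histPdf_eq_sum_indicator (d n : ℕ) (w : (Fin d → Fin n) → ℝ)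
    (x : EuclideanSpace ℝ (Fin d)) :
    histPdf d n w x = ∑ k : Fin d → Fin n, (boxE d n k).indicator (fun _ => w k) x := by
  unfold histPdf
  refine Finset.sum_congr rfl fun k _ => ?_
  by_cases h : x ∈ boxE d n k
  · rw [Set.indicator_of_mem ((mem_boxE_iff_indicator k x).mpr h), mul_one,
      Set.indicator_of_mem h]
  · rw [Set.indicator_of_notMem (fun hm => h ((mem_boxE_iff_indicator k x).mp hm)), mul_zero,
      Set.indicator_of_notMem h]

end HistAux

open HistAux in
open scoped ENNReal in
theorem histogram_tv_approx (d : ℕ) (L : NNReal) (p : EuclideanSpace ℝ (Fin d) → ℝ)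
    (hLip : LipschitzOnWith L p (unitCube d))
    (hsupp : ∀ x ∉ unitCube d, p x = 0)
    (hpos : ∀ x ∈ unitCube d, 0 < p x)
    (hint : ∫ x in unitCube d, p x = 1)
    (n : ℕ) (hn : 0 < n) :
    ∃ w : (Fin d → Fin n) → ℝ, (∀ k, 0 < w k) ∧ (∑ k, w k = (n:ℝ)^d) ∧
      (1/2) * ∫ x in unitCube d, |p x - histPdf d n w x| ≤ L * Real.sqrt d / (2*n) := by
  classical
  have hn' : (0:ℝ) < n := by exact_mod_cast hn
  have hboxM : ∀ k, MeasurableSet (boxE d n k) := measurableSet_boxE d n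
  have hboxV : ∀ k, volume (boxE d n k) = ((n : ℝ≥0∞)⁻¹) ^ d := volume_boxE d n hn
  have hboxVlt : ∀ k, volume (boxE d n k) < ⊤ := by
    intro k; rw [hboxV k]
    exact ENNReal.pow_lt_top (ENNReal.inv_lt_top.2 (by exact_mod_cast hn : (0:ℝ≥0∞) < n))
  have hboxVr : ∀ k, (volume (boxE d n k)).toReal = ((n:ℝ)⁻¹) ^ d := by
    intro k; rw [hboxV k]
    simp [ENNReal.toReal_pow, ENNReal.toReal_inv]
  have hsub : ∀ k, boxE d n k ⊆ unitCube d := boxE_subset_unitCube hn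
  have hnd : (n:ℝ)^d * ((n:ℝ)⁻¹)^d = 1 := by
    rw [← mul_pow, mul_inv_cancel₀ (ne_of_gt hn'), one_pow]
  -- compactness and integrability
  have hcompact : IsCompact (unitCube d) := by
    have heq : unitCube d = (PiLp.continuousLinearEquiv 2 ℝ (fun _ : Fin d => ℝ)).toHomeomorph
        ⁻¹' (Set.univ.pi fun _ => Set.Icc (0:ℝ) 1) := by
      ext x
      constructor
      · intro h i _
        exact h i
      · intro h i
        exact h i (Set.mem_univ i)
    rw [heq, Homeomorph.isCompact_preimage]
    exact isCompact_univ_pi fun i => isCompact_Icc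
  have hpint : IntegrableOn p (unitCube d) :=
    hLip.continuousOn.integrableOn_compact hcompact
  have hpintk : ∀ k, IntegrableOn p (boxE d n k) := fun k => hpint.mono_set (hsub k)
  set w : (Fin d → Fin n) → ℝ := fun k => (n:ℝ)^d * ∫ x in boxE d n k, p x with hw
  -- union facts
  have hdisj : Pairwise (Function.onFun Disjoint (boxE d n)) := by
    intro k k' hne
    rw [Function.onFun, Set.disjoint_left]
    intro x hx hx'
    exact hne (boxE_inj hx hx')
  have hUsub : (⋃ k, boxE d n k) ⊆ unitCube d := Set.iUnion_subset hsub
  have hUvol : volume (⋃ k, boxE d n k) = 1 := by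
    rw [measure_iUnion hdisj hboxM, tsum_fintype]
    simp only [hboxV, Finset.sum_const, Finset.card_univ]
    rw [Fintype.card_fun, Fintype.card_fin, Fintype.card_fin, nsmul_eq_mul]
    rw [Nat.cast_pow, ← mul_pow, ENNReal.mul_inv_cancel (by exact_mod_cast hn.ne')
      (ENNReal.natCast_ne_top n), one_pow]
  have hae : (⋃ k, boxE d n k) =ᵐ[volume] unitCube d := by
    refine ae_eq_of_subset_of_measure_ge hUsub ?_ ?_ ?_
    · rw [hUvol, volume_unitCube]
    · exact (MeasurableSet.iUnion hboxM).nullMeasurableSet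
    · rw [volume_unitCube]; exact ENNReal.one_ne_top
  have hsum_int : ∀ f : EuclideanSpace ℝ (Fin d) → ℝ, IntegrableOn f (unitCube d) →
      ∫ x in unitCube d, f x = ∑ k, ∫ x in boxE d n k, f x := by
    intro f hf
    rw [← setIntegral_congr_set hae,
      integral_iUnion hboxM hdisj (hf.mono_set hUsub), tsum_fintype]
  refine ⟨w, ?_, ?_, ?_⟩
  · -- positivity
    intro k
    have hposint : 0 < ∫ x in boxE d n k, p x := by
      rw [setIntegral_pos_iff_support_of_nonneg_ae
        ((ae_restrict_iff' (hboxM k)).2 (ae_of_all _ fun x hx => (hpos x (hsub k hx)).le))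
        (hpintk k)]
      have hss : boxE d n k ⊆ Function.support p := fun x hx => (hpos x (hsub k hx)).ne'
      rw [Set.inter_eq_self_of_subset_right hss, hboxV k]
      exact ENNReal.pow_pos (ENNReal.inv_pos.2 (ENNReal.natCast_ne_top n)) d
    exact mul_pos (pow_pos hn' d) hposint
  · -- sum of weights
    rw [hw]
    rw [← Finset.mul_sum, ← hsum_int p hpint, hint, mul_one]
  · -- main bound
    set C : ℝ := (L:ℝ) * (Real.sqrt d / n) with hC
    have hC0 : 0 ≤ C := by positivity
    -- pointwise averaged bound
    have hkey : ∀ k, ∀ x ∈ boxE d n k, |p x - w k| ≤ C := by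
      intro k x hx
      have hx' : x ∈ unitCube d := hsub k hx
      have hptdist : ∀ y ∈ boxE d n k, ‖p y - p x‖ ≤ C := by
        intro y hy
        have hy' : y ∈ unitCube d := hsub k hy
        have hdisti : dist y x ≤ Real.sqrt d / n := by
          rw [EuclideanSpace.dist_eq]
          have hbound : ∀ i, dist (y i) (x i) ≤ 1 / n := by
            intro i
            have h1 := hy i
            have h2 := hx i
            have hlen : ((k i : ℝ) + 1) / n = (k i : ℝ) / n + 1 / n := by
              rw [add_div]
            rw [Real.dist_eq, abs_le]
            constructor <;> [skip; skip] <;>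
              nlinarith [h1.1, h1.2, h2.1, h2.2]
          have hsq : ∑ i, dist (y i) (x i) ^ 2 ≤ (d:ℝ) * ((1:ℝ)/n)^2 := by
            calc ∑ i, dist (y i) (x i) ^ 2 ≤ ∑ _i : Fin d, ((1:ℝ)/n)^2 := by
                  refine Finset.sum_le_sum fun i _ => ?_
                  exact pow_le_pow_left₀ dist_nonneg (hbound i) 2
              _ = (d:ℝ) * ((1:ℝ)/n)^2 := by simp [Finset.sum_const, mul_comm]
          calc Real.sqrt (∑ i, dist (y i) (x i) ^ 2) ≤ Real.sqrt ((d:ℝ) * ((1:ℝ)/n)^2) :=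
                Real.sqrt_le_sqrt hsq
            _ = Real.sqrt d / n := by
                rw [Real.sqrt_mul (Nat.cast_nonneg d), Real.sqrt_sq (by positivity)]
                ring
        calc ‖p y - p x‖ = dist (p y) (p x) := by rw [dist_eq_norm]
          _ ≤ L * dist y x := hLip.dist_le_mul y hy' x hx'
          _ ≤ L * (Real.sqrt d / n) := by
              exact mul_le_mul_of_nonneg_left hdisti (NNReal.coe_nonneg L)
      have hconstint : IntegrableOn (fun _ => p x) (boxE d n k) :=
        integrableOn_const (hboxVlt k).ne
      have hdiff : w k - p x = (n:ℝ)^d * ∫ y in boxE d n k, (p y - p x) := by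
        rw [integral_sub (hpintk k) hconstint, setIntegral_const, measureReal_def, hboxVr k, smul_eq_mul,
          mul_sub, ← mul_assoc, hnd, one_mul, hw]
      have hnormint : ‖∫ y in boxE d n k, (p y - p x)‖ ≤ C * ((n:ℝ)⁻¹)^d := by
        rw [← hboxVr k]
        exact norm_setIntegral_le_of_norm_le_const (hboxVlt k) hptdist
      rw [abs_sub_comm, ← Real.norm_eq_abs, hdiff, norm_mul]
      calc ‖(n:ℝ)^d‖ * ‖∫ y in boxE d n k, (p y - p x)‖
          ≤ (n:ℝ)^d * (C * ((n:ℝ)⁻¹)^d) := by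
            rw [Real.norm_eq_abs, abs_of_nonneg (by positivity)]
            exact mul_le_mul_of_nonneg_left hnormint (by positivity)
        _ = C := by rw [mul_comm C, ← mul_assoc, hnd, one_mul]
    -- integrability of histPdf
    have hhistint : IntegrableOn (histPdf d n w) (unitCube d) := by
      have : Integrable (fun x => ∑ k : Fin d → Fin n,
          (boxE d n k).indicator (fun _ => w k) x) volume := by
        refine integrable_finset_sum _ fun k _ => ?_
        rw [integrable_indicator_iff (hboxM k)]
        exact integrableOn_const (hboxVlt k).ne
      have heq : histPdf d n w = fun x => ∑ k : Fin d → Fin n,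
          (boxE d n k).indicator (fun _ => w k) x := by
        funext x; exact histPdf_eq_sum_indicator d n w x
      rw [heq]
      exact this.integrableOn
    have habs_int : IntegrableOn (fun x => |p x - histPdf d n w x|) (unitCube d) :=
      (hpint.sub hhistint).abs
    have hIeq : ∀ k, ∫ x in boxE d n k, |p x - histPdf d n w x|
        = ∫ x in boxE d n k, |p x - w k| := by
      intro k
      refine setIntegral_congr_fun (hboxM k) fun x hx => ?_
      rw [histPdf_eq_on_box hx]
    have hIb : ∀ k, ∫ x in boxE d n k, |p x - w k| ≤ C * ((n:ℝ)⁻¹)^d := by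
      intro k
      have hintabs : IntegrableOn (fun x => |p x - w k|) (boxE d n k) :=
        (((hpintk k).sub (integrableOn_const (hboxVlt k).ne))).abs
      calc ∫ x in boxE d n k, |p x - w k| ≤ ∫ _x in boxE d n k, C := by
            refine setIntegral_mono_on hintabs (integrableOn_const (hboxVlt k).ne)
              (hboxM k) fun x hx => hkey k x hx
        _ = C * ((n:ℝ)⁻¹)^d := by rw [setIntegral_const, measureReal_def, hboxVr k, smul_eq_mul, mul_comm]
    have htot : ∫ x in unitCube d, |p x - histPdf d n w x| ≤ C := by
      rw [hsum_int _ habs_int]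
      calc ∑ k, ∫ x in boxE d n k, |p x - histPdf d n w x|
          ≤ ∑ _k : Fin d → Fin n, C * ((n:ℝ)⁻¹)^d := by
            refine Finset.sum_le_sum fun k _ => ?_
            rw [hIeq k]; exact hIb k
        _ = (n:ℝ)^d * (C * ((n:ℝ)⁻¹)^d) := by
            rw [Finset.sum_const, Finset.card_univ, Fintype.card_fun, Fintype.card_fin,
              Fintype.card_fin, nsmul_eq_mul, Nat.cast_pow]
        _ = C := by rw [mul_comm C, ← mul_assoc, hnd, one_mul]
    calc (1/2) * ∫ x in unitCube d, |p x - histPdf d n w x| ≤ (1/2) * C :=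
          mul_le_mul_of_nonneg_left htot (by norm_num)
      _ = L * Real.sqrt d / (2*n) := by rw [hC]; ring
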